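/- Let x_1, …, x_N ∈ ℝ^d satisfy ‖x_n‖₂ ≤ M for all n = 1, …, N, and let k ≥ 0 be an integer. Then 2^{−N} Σ_{σ ∈ {−1,1}^N} sup_{w ∈ ℝ^d, ‖w‖₂ ≤ 1} Σ_{n=1}^N σ_n ⟨w, x_n⟩^k ≤ √N · M^k. -/

import Mathlib

set_option linter.unnecessarySimpa false
open scoped InnerProductSpace BigOperators

noncomputable def tpow (k d : ℕ) (v : EuclideanSpace ℝ (Fin d)) :
    EuclideanSpace ℝ (Fin k → Fin d) := WithLp.toLp 2 (fun i => ∏ j, v (i j))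

lemma inner_tpow (k d : ℕ) (w v : EuclideanSpace ℝ (Fin d)) :
    ⟪tpow k d w, tpow k d v⟫_ℝ = ⟪w, v⟫_ℝ ^ k := by
  simp only [PiLp.inner_apply, RCLike.inner_apply, starRingEnd_apply, star_trivial, tpow]
  rw [Fintype.sum_pow (fun c => v c * w c) k]
  exact Finset.sum_congr rfl fun p _ => (Finset.prod_mul_distrib).symm

lemma norm_tpow (k d : ℕ) (v : EuclideanSpace ℝ (Fin d)) :
    ‖tpow k d v‖ = ‖v‖ ^ k := by
  have h := inner_tpow k d v v
  rw [real_inner_self_eq_norm_sq, real_inner_self_eq_norm_sq, ← pow_mul] at h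
  calc ‖tpow k d v‖ = Real.sqrt (‖tpow k d v‖ ^ 2) := (Real.sqrt_sq (norm_nonneg _)).symm
    _ = Real.sqrt ((‖v‖ ^ k) ^ 2) := by rw [h, pow_mul']
    _ = ‖v‖ ^ k := Real.sqrt_sq (by positivity)

noncomputable def eps {N : ℕ} (σ : Fin N → Bool) (n : Fin N) : ℝ :=
  if σ n then (1:ℝ) else -1

lemma sum_eps_mul (N : ℕ) (n m : Fin N) (hnm : n ≠ m) :
    ∑ σ : Fin N → Bool, eps σ n * eps σ m = 0 := by
  apply Finset.sum_ninvolution (fun σ => Function.update σ n (!σ n))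
  · intro σ
    have h1 : Function.update σ n (!σ n) n = !σ n := Function.update_self _ _ _
    have h2 : Function.update σ n (!σ n) m = σ m := Function.update_of_ne (Ne.symm hnm) _ _
    simp only [eps, h1, h2]
    cases σ n <;> cases σ m <;> norm_num
  · intro σ _ h
    have := congrFun h n
    simp at this
  · intro σ; exact Finset.mem_univ _
  · intro σ
    funext i
    by_cases hi : i = n
    · subst hi; simp
    · simp [Function.update_apply, hi]

noncomputable def Tvec (d N k : ℕ) (x : Fin N → EuclideanSpace ℝ (Fin d))
    (σ : Fin N → Bool) : EuclideanSpace ℝ (Fin k → Fin d) :=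
  ∑ n, eps σ n • tpow k d (x n)

lemma inner_Tvec (d N k : ℕ) (x : Fin N → EuclideanSpace ℝ (Fin d))
    (σ : Fin N → Bool) (w : EuclideanSpace ℝ (Fin d)) :
    ⟪tpow k d w, Tvec d N k x σ⟫_ℝ = ∑ n, eps σ n * ⟪w, x n⟫_ℝ ^ k := by
  unfold Tvec
  rw [inner_sum]
  exact Finset.sum_congr rfl fun n _ => by
    rw [real_inner_smul_right, inner_tpow]

lemma normsq_Tvec (d N k : ℕ) (x : Fin N → EuclideanSpace ℝ (Fin d))
    (σ : Fin N → Bool) :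
    ‖Tvec d N k x σ‖ ^ 2 = ∑ n, ∑ m, (eps σ n * eps σ m) * ⟪x n, x m⟫_ℝ ^ k := by
  rw [← real_inner_self_eq_norm_sq]
  unfold Tvec
  rw [sum_inner]
  refine Finset.sum_congr rfl fun n _ => ?_
  rw [real_inner_smul_left, inner_sum, Finset.mul_sum]
  refine Finset.sum_congr rfl fun m _ => ?_
  rw [real_inner_smul_right, inner_tpow]

  ring

theorem rademacher_sup_inner_pow_bound (d N k : ℕ) (M : ℝ)
    (x : Fin N → EuclideanSpace ℝ (Fin d)) (hx : ∀ n, ‖x n‖ ≤ M) :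
    ((2 : ℝ) ^ N)⁻¹ * ∑ σ : Fin N → Bool,
      sSup {r : ℝ | ∃ w : EuclideanSpace ℝ (Fin d), ‖w‖ ≤ 1 ∧
        r = ∑ n, (if σ n then (1 : ℝ) else -1) * (⟪w, x n⟫_ℝ) ^ k}
      ≤ Real.sqrt N * M ^ k := by
  by_cases hN : N = 0
  · subst hN
    have hset : ∀ σ : Fin 0 → Bool, {r : ℝ | ∃ w : EuclideanSpace ℝ (Fin d), ‖w‖ ≤ 1 ∧
        r = ∑ n, (if σ n then (1 : ℝ) else -1) * (⟪w, x n⟫_ℝ) ^ k} = {0} := by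
      intro σ
      ext r
      constructor
      · rintro ⟨w, -, rfl⟩; simp
      · rintro rfl; exact ⟨0, by simp, by simp⟩
    have h0 : ∀ σ : Fin 0 → Bool, sSup {r : ℝ | ∃ w : EuclideanSpace ℝ (Fin d), ‖w‖ ≤ 1 ∧
        r = ∑ n, (if σ n then (1 : ℝ) else -1) * (⟪w, x n⟫_ℝ) ^ k} = 0 := by
      intro σ; rw [hset σ]; exact csSup_singleton 0
    rw [Finset.sum_congr rfl fun σ _ => h0 σ]
    simp
  have hM : 0 ≤ M := le_trans (norm_nonneg (x ⟨0, Nat.pos_of_ne_zero hN⟩)) (hx _)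
  -- Step 1
  have step1 : ∀ σ : Fin N → Bool,
      sSup {r : ℝ | ∃ w : EuclideanSpace ℝ (Fin d), ‖w‖ ≤ 1 ∧
        r = ∑ n, (if σ n then (1 : ℝ) else -1) * (⟪w, x n⟫_ℝ) ^ k}
        ≤ ‖Tvec d N k x σ‖ := by
    intro σ
    apply Real.sSup_le _ (norm_nonneg _)
    rintro r ⟨w, hw, rfl⟩
    rw [show (∑ n, (if σ n then (1 : ℝ) else -1) * (⟪w, x n⟫_ℝ) ^ k)
        = ⟪tpow k d w, Tvec d N k x σ⟫_ℝ from (inner_Tvec d N k x σ w).symm]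
    calc ⟪tpow k d w, Tvec d N k x σ⟫_ℝ ≤ ‖tpow k d w‖ * ‖Tvec d N k x σ‖ :=
          real_inner_le_norm _ _
      _ ≤ 1 * ‖Tvec d N k x σ‖ := by
          apply mul_le_mul_of_nonneg_right _ (norm_nonneg _)
          rw [norm_tpow]
          exact pow_le_one₀ (norm_nonneg w) hw
      _ = ‖Tvec d N k x σ‖ := one_mul _
  have hcard : ((Finset.univ : Finset (Fin N → Bool)).card : ℝ) = 2 ^ N := by
    simp [Finset.card_univ]
  -- Step 2: second moment
  have hsum2 : ∑ σ : Fin N → Bool, ‖Tvec d N k x σ‖ ^ 2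
      = 2 ^ N * ∑ n, ⟪x n, x n⟫_ℝ ^ k := by
    simp_rw [normsq_Tvec]
    rw [Finset.sum_comm]
    have key : ∀ n : Fin N,
        ∑ σ : Fin N → Bool, ∑ m, (eps σ n * eps σ m) * ⟪x n, x m⟫_ℝ ^ k
        = 2 ^ N * ⟪x n, x n⟫_ℝ ^ k := by
      intro n
      rw [Finset.sum_comm]
      have hdiag : ∑ σ : Fin N → Bool, (eps σ n * eps σ n) * ⟪x n, x n⟫_ℝ ^ k
          = 2 ^ N * ⟪x n, x n⟫_ℝ ^ k := by
        rw [← Finset.sum_mul]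
        congr 1
        have h1 : ∀ σ : Fin N → Bool, eps σ n * eps σ n = 1 := by
          intro σ; unfold eps; cases σ n <;> norm_num
        rw [Finset.sum_congr rfl fun σ _ => h1 σ]
        simpa using hcard
      rw [← Finset.sum_erase_add _ _ (Finset.mem_univ n), Finset.sum_eq_zero, zero_add, hdiag]
      intro m hm
      rw [← Finset.sum_mul, sum_eps_mul N n m (Ne.symm (Finset.ne_of_mem_erase hm)), zero_mul]
    rw [Finset.sum_congr rfl fun n _ => key n, Finset.mul_sum]
  have hbd : ∑ n, ⟪x n, x n⟫_ℝ ^ k ≤ N * (M ^ k) ^ 2 := by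
    have h1 : ∀ n : Fin N, ⟪x n, x n⟫_ℝ ^ k ≤ (M ^ k) ^ 2 := by
      intro n
      rw [real_inner_self_eq_norm_sq, ← pow_mul, mul_comm 2 k, pow_mul]
      exact pow_le_pow_left₀ (by positivity)
        (pow_le_pow_left₀ (norm_nonneg _) (hx n) k) 2
    calc ∑ n, ⟪x n, x n⟫_ℝ ^ k ≤ ∑ _n : Fin N, (M ^ k) ^ 2 :=
          Finset.sum_le_sum fun n _ => h1 n
      _ = N * (M ^ k) ^ 2 := by simp [mul_comm]
  -- Step 3
  have h1 : (∑ σ : Fin N → Bool, ‖Tvec d N k x σ‖) ^ 2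
      ≤ 2 ^ N * (2 ^ N * (N * (M ^ k) ^ 2)) := by
    calc (∑ σ : Fin N → Bool, ‖Tvec d N k x σ‖) ^ 2
        ≤ ((Finset.univ : Finset (Fin N → Bool)).card : ℝ)
            * ∑ σ : Fin N → Bool, ‖Tvec d N k x σ‖ ^ 2 :=
          sq_sum_le_card_mul_sum_sq
      _ = 2 ^ N * (2 ^ N * ∑ n, ⟪x n, x n⟫_ℝ ^ k) := by rw [hcard, hsum2]
      _ ≤ 2 ^ N * (2 ^ N * (N * (M ^ k) ^ 2)) := by
          apply mul_le_mul_of_nonneg_left _ (by positivity)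
          exact mul_le_mul_of_nonneg_left hbd (by positivity)
  have hsq : (2 ^ N * (Real.sqrt N * M ^ k)) ^ 2 = 2 ^ N * (2 ^ N * (N * (M ^ k) ^ 2)) := by
    have hs : (Real.sqrt N) ^ 2 = (N : ℝ) := Real.sq_sqrt (Nat.cast_nonneg N)
    rw [mul_pow, mul_pow, hs]; ring
  have hsumnorm : ∑ σ : Fin N → Bool, ‖Tvec d N k x σ‖
      ≤ 2 ^ N * (Real.sqrt N * M ^ k) := by
    calc ∑ σ : Fin N → Bool, ‖Tvec d N k x σ‖
        = Real.sqrt ((∑ σ : Fin N → Bool, ‖Tvec d N k x σ‖) ^ 2) :=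
          (Real.sqrt_sq (Finset.sum_nonneg fun σ _ => norm_nonneg _)).symm
      _ ≤ Real.sqrt ((2 ^ N * (Real.sqrt N * M ^ k)) ^ 2) :=
          Real.sqrt_le_sqrt (by rw [hsq]; exact h1)
      _ = 2 ^ N * (Real.sqrt N * M ^ k) := Real.sqrt_sq (by positivity)
  calc ((2 : ℝ) ^ N)⁻¹ * ∑ σ : Fin N → Bool,
      sSup {r : ℝ | ∃ w : EuclideanSpace ℝ (Fin d), ‖w‖ ≤ 1 ∧
        r = ∑ n, (if σ n then (1 : ℝ) else -1) * (⟪w, x n⟫_ℝ) ^ k}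
      ≤ ((2 : ℝ) ^ N)⁻¹ * ∑ σ : Fin N → Bool, ‖Tvec d N k x σ‖ :=
        mul_le_mul_of_nonneg_left (Finset.sum_le_sum fun σ _ => step1 σ) (by positivity)
    _ ≤ ((2 : ℝ) ^ N)⁻¹ * (2 ^ N * (Real.sqrt N * M ^ k)) :=
        mul_le_mul_of_nonneg_left hsumnorm (by positivity)
    _ = Real.sqrt N * M ^ k := by field_simp
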